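/- For all nonempty subsets v ⊆ u ⊆ {1,…,s}, t*_v ≤ t*_u + |u| − |v|. -/

import Mathlib

open Finset

noncomputable section

/-- The bit vector `i⃗ ∈ F₂^m` of the integer `i = Σ_{ℓ=1}^m i_ℓ 2^{ℓ-1}`. -/
def bvec (m : ℕ) (i : ℕ) : Fin m → ZMod 2 :=
  fun ℓ => if Nat.testBit i ℓ.1 then 1 else 0

/-- The `(r+1)`-st row (i.e. `r` with 0-indexing) of an `m × m` matrix over `F₂`,
as a vector in `F₂^m`; junk value `0` if `r ≥ m` (never used under the hypotheses below). -/
def rowAt (m : ℕ) (A : Matrix (Fin m) (Fin m) (ZMod 2)) (r : ℕ) : Fin m → ZMod 2 :=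
  fun ℓ => if h : r < m then A ⟨r, h⟩ ℓ else 0

/-- The stacked matrix `C_{u,k}`: for each `j ∈ u`, the first `k j` rows of `C j`. -/
def stack {m s : ℕ} (C : Fin s → Matrix (Fin m) (Fin m) (ZMod 2))
    (u : Finset (Fin s)) (k : Fin s → ℕ) :
    Matrix ((j : {x // x ∈ u}) × Fin (k j.1)) (Fin m) (ZMod 2) :=
  fun p => rowAt m (C p.1.1) p.2.1

/-- `∇C_{u,k}`: the matrix whose rows are the `(k j + 1)`-st rows (1-indexed) of `C j`, `j ∈ u`. -/
def grad {m s : ℕ} (C : Fin s → Matrix (Fin m) (Fin m) (ZMod 2))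
    (u : Finset (Fin s)) (k : Fin s → ℕ) :
    Matrix {x // x ∈ u} (Fin m) (ZMod 2) :=
  fun j => rowAt m (C j.1) (k j.1)

/-- The coordinate `x_{ij} ∈ [0,1)` of the digital net generated by `C₁,…,C_s`:
`x_{ij} = Σ_{ℓ=1}^m y_ℓ 2^{-ℓ}` where `y = C_j · i⃗` over `F₂`. -/
def pt {m s : ℕ} (C : Fin s → Matrix (Fin m) (Fin m) (ZMod 2)) (i : ℕ) (j : Fin s) : ℝ :=
  ∑ ℓ : Fin m, (((C j).mulVec (bvec m i) ℓ).val : ℝ) / 2 ^ (ℓ.1 + 1)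

/-- The factor `N`: with `M(x,x') = max{k ∈ ℕ₀ : ⌊2^k x⌋ = ⌊2^k x'⌋}` (the number of matching
leading binary digits), `Nf x x' c` equals `1` if `M(x,x') > c` (equivalently the first `c+1`
binary digits match), `-1` if `M(x,x') = c` (the first `c` digits match but not `c+1`), and
`0` if `M(x,x') < c`. -/
def Nf (x x' : ℝ) (c : ℕ) : ℤ :=
  if ⌊(2:ℝ) ^ (c + 1) * x⌋ = ⌊(2:ℝ) ^ (c + 1) * x'⌋ then 1
  else if ⌊(2:ℝ) ^ c * x⌋ = ⌊(2:ℝ) ^ c * x'⌋ then -1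
  else 0

/-- The gain coefficient `Γ_{u,k} = 2^{-m} Σ_{i=0}^{2^m-1} Σ_{i'=0}^{2^m-1} ∏_{j∈u} N_{i,i',j}`. -/
def Gam {m s : ℕ} (C : Fin s → Matrix (Fin m) (Fin m) (ZMod 2))
    (u : Finset (Fin s)) (k : Fin s → ℕ) : ℚ :=
  (2 ^ m : ℚ)⁻¹ * ∑ i ∈ Finset.range (2 ^ m), ∑ i' ∈ Finset.range (2 ^ m),
      ∏ j ∈ u, (Nf (pt C i j) (pt C i' j) (k j) : ℚ)

/-- `t*_u = m + 1 - min{|k| : 1 ≤ k_j ≤ m for all j ∈ u, C_{u,k} not of full row rank}`,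
with the convention that the minimum over the empty set is `m+1`. -/
def tStar {m s : ℕ} (C : Fin s → Matrix (Fin m) (Fin m) (ZMod 2))
    (u : Finset (Fin s)) : ℕ :=
  m + 1 - sInf ({K : ℕ | ∃ k : Fin s → ℕ, (∀ j ∈ u, 1 ≤ k j ∧ k j ≤ m) ∧
      K = ∑ j ∈ u, k j ∧ (stack C u k).rank ≠ ∑ j ∈ u, k j} ∪ {m + 1})

lemma rank_stack_le {m s : ℕ} (C : Fin s → Matrix (Fin m) (Fin m) (ZMod 2))
    (u v : Finset (Fin s)) (hvu : v ⊆ u) (k k' : Fin s → ℕ)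
    (hkv : ∀ j ∈ v, k' j = k j) (hk1 : ∀ j ∈ u, j ∉ v → k' j = 1) :
    (stack C u k').rank ≤ (stack C v k).rank + (u.card - v.card) := by
  classical
  rw [Matrix.rank_eq_finrank_span_row, Matrix.rank_eq_finrank_span_row]
  set S : Set (Fin m → ZMod 2) := Set.range (stack C v k)
  set T : Set (Fin m → ZMod 2) := Set.range (fun j : {x // x ∈ u \ v} => rowAt m (C j.1) 0)
  have hsub : Set.range (stack C u k') ⊆ S ∪ T := by
    rintro x ⟨⟨⟨j, hj⟩, r⟩, rfl⟩
    by_cases hjv : j ∈ v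
    · left
      have hkk : k' j = k j := hkv j hjv
      refine ⟨⟨⟨j, hjv⟩, ⟨r.1, by rw [← hkk]; exact r.2⟩⟩, rfl⟩
    · right
      have h1 : k' j = 1 := hk1 j hj hjv
      have h2 : (r : ℕ) < k' j := r.2
      have hr0 : r.1 = 0 := by omega
      refine ⟨⟨j, Finset.mem_sdiff.mpr ⟨hj, hjv⟩⟩, ?_⟩
      simp only [stack]
      rw [hr0]
  calc Module.finrank (ZMod 2) ↥(Submodule.span (ZMod 2) (Set.range (stack C u k')))
      ≤ Module.finrank (ZMod 2) ↥(Submodule.span (ZMod 2) (S ∪ T)) :=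
        Submodule.finrank_mono (Submodule.span_mono hsub)
    _ = Module.finrank (ZMod 2) ↥(Submodule.span (ZMod 2) S ⊔ Submodule.span (ZMod 2) T) := by
        rw [Submodule.span_union]
    _ ≤ Module.finrank (ZMod 2) ↥(Submodule.span (ZMod 2) S)
          + Module.finrank (ZMod 2) ↥(Submodule.span (ZMod 2) T) :=
        Submodule.finrank_add_le_finrank_add_finrank _ _
    _ ≤ _ := by
        gcongr ?_ + ?_
        · exact le_rfl
        calc Module.finrank (ZMod 2) ↥(Submodule.span (ZMod 2) T)
            ≤ Fintype.card {x // x ∈ u \ v} := finrank_range_le_card _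
          _ = (u \ v).card := Fintype.card_coe _
          _ = u.card - v.card := Finset.card_sdiff_of_subset hvu


lemma rank_lt_sum {m s : ℕ} (C : Fin s → Matrix (Fin m) (Fin m) (ZMod 2))
    (v : Finset (Fin s)) (k : Fin s → ℕ) (h : (stack C v k).rank ≠ ∑ j ∈ v, k j) :
    (stack C v k).rank < ∑ j ∈ v, k j := by
  refine lt_of_le_of_ne ?_ h
  calc (stack C v k).rank ≤ Fintype.card ((j : {x // x ∈ v}) × Fin (k j.1)) :=
        Matrix.rank_le_card_height _
    _ = ∑ j : {x // x ∈ v}, k j.1 := by simp [Fintype.card_sigma]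
    _ = ∑ j ∈ v, k j := Finset.sum_coe_sort v k

theorem statement (m s : ℕ) (hm : 1 ≤ m) (hs : 1 ≤ s)
    (C : Fin s → Matrix (Fin m) (Fin m) (ZMod 2))
    (u v : Finset (Fin s)) (hu : u.Nonempty) (hv : v.Nonempty) (hvu : v ⊆ u) :
    tStar C v ≤ tStar C u + u.card - v.card := by
  classical
  set SU : Set ℕ := {K : ℕ | ∃ k : Fin s → ℕ, (∀ j ∈ u, 1 ≤ k j ∧ k j ≤ m) ∧
      K = ∑ j ∈ u, k j ∧ (stack C u k).rank ≠ ∑ j ∈ u, k j} ∪ {m + 1} with hSU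
  set SV : Set ℕ := {K : ℕ | ∃ k : Fin s → ℕ, (∀ j ∈ v, 1 ≤ k j ∧ k j ≤ m) ∧
      K = ∑ j ∈ v, k j ∧ (stack C v k).rank ≠ ∑ j ∈ v, k j} ∪ {m + 1} with hSV
  have hIu_le : sInf SU ≤ m + 1 := Nat.sInf_le (Or.inr rfl)
  have hIv_le : sInf SV ≤ m + 1 := Nat.sInf_le (Or.inr rfl)
  have hc : v.card ≤ u.card := Finset.card_le_card hvu
  have hIv_mem : sInf SV ∈ SV := Nat.sInf_mem ⟨m + 1, Or.inr rfl⟩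
  have key : sInf SU ≤ sInf SV + (u.card - v.card) := by
    rcases hIv_mem with h | h
    · obtain ⟨k, hk, hsum, hrank⟩ := h
      set k' : Fin s → ℕ := fun j => if j ∈ v then k j else 1 with hk'
      refine Nat.sInf_le (Or.inl ⟨k', ?_, ?_, ?_⟩)
      · intro j hj
        by_cases hjv : j ∈ v
        · simpa [hk', hjv] using hk j hjv
        · simp [hk', hjv, hm]
      · have h1 : ∑ j ∈ u \ v, k' j = (u \ v).card := by
          rw [Finset.card_eq_sum_ones]
          refine Finset.sum_congr rfl fun j hj => ?_
          simp [hk', (Finset.mem_sdiff.mp hj).2]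
        have h2 : ∑ j ∈ v, k' j = ∑ j ∈ v, k j :=
          Finset.sum_congr rfl fun j hj => by simp [hk', hj]
        rw [← Finset.sum_sdiff hvu, h1, h2, Finset.card_sdiff_of_subset hvu, ← hsum]
        omega
      · have hk'v : ∀ j ∈ v, k' j = k j := fun j hj => by simp [hk', hj]
        have hk'1 : ∀ j ∈ u, j ∉ v → k' j = 1 := fun j _ hjv => by simp [hk', hjv]
        have hle := rank_stack_le C u v hvu k k' hk'v hk'1
        have hlt := rank_lt_sum C v k hrank
        have hsum' : ∑ j ∈ u, k' j = ∑ j ∈ v, k j + (u.card - v.card) := by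
          have h1 : ∑ j ∈ u \ v, k' j = (u \ v).card := by
            rw [Finset.card_eq_sum_ones]
            refine Finset.sum_congr rfl fun j hj => ?_
            simp [hk', (Finset.mem_sdiff.mp hj).2]
          have h2 : ∑ j ∈ v, k' j = ∑ j ∈ v, k j :=
            Finset.sum_congr rfl fun j hj => by simp [hk', hj]
          rw [← Finset.sum_sdiff hvu, h1, h2, Finset.card_sdiff_of_subset hvu]
          omega
        omega
    · simp only [Set.mem_singleton_iff] at h
      omega
  show m + 1 - sInf SV ≤ m + 1 - sInf SU + u.card - v.card
  omega


end
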